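/- For real q with 0 ≤ q < 1, ∑_{n=0}^∞ q^n (q;q^3)_n = ∑_{n=0}^∞ (-1)^n q^{n(3n+1)/2} / (q;q^3)_{n+1}, where (q;q^3)_m = ∏_{k=0}^{m-1}(1 - q^{1+3k}). -/

import Mathlib

open Finset Filter

/-- Gaussian binomial coefficients (as real numbers) in base `Q`,
via the Pascal recursion `B (n+1) (j+1) = Q^(j+1) * B n (j+1) + B n j`. -/
def gB (Q : ℝ) : ℕ → ℕ → ℝ
  | 0, 0 => 1
  | 0, _+1 => 0
  | _+1, 0 => 1
  | n+1, j+1 => Q ^ (j+1) * gB Q n (j+1) + gB Q n j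

/-- `E j = j*(j-1)/2`. -/
def E : ℕ → ℕ
  | 0 => 0
  | j+1 => E j + j

lemma gB_zero_right (Q : ℝ) : ∀ n, gB Q n 0 = 1
  | 0 => rfl
  | _+1 => rfl

lemma gB_eq_zero (Q : ℝ) : ∀ n j, n < j → gB Q n j = 0
  | 0, _+1, _ => rfl
  | n+1, j+1, h => by
      rw [gB, gB_eq_zero Q n (j+1) (by omega), gB_eq_zero Q n j (by omega)]
      ring

lemma gB_nonneg {Q : ℝ} (hQ : 0 ≤ Q) : ∀ n j, 0 ≤ gB Q n j
  | 0, 0 => zero_le_one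
  | 0, _+1 => le_refl 0
  | _+1, 0 => zero_le_one
  | n+1, j+1 => by
      rw [gB]
      have h1 := gB_nonneg hQ n (j+1)
      have h2 := gB_nonneg hQ n j
      positivity

lemma gB_le {Q : ℝ} (hQ0 : 0 ≤ Q) (hQ1 : Q < 1) : ∀ n j, gB Q n j ≤ ((1 - Q)⁻¹) ^ j
  | 0, 0 => by norm_num [gB]
  | 0, j+1 => by
      have hpos : (0:ℝ) < 1 - Q := by linarith
      rw [gB_eq_zero Q 0 (j+1) (by omega)]
      positivity
  | n+1, 0 => by norm_num [gB_zero_right]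
  | n+1, j+1 => by
      have hpos : (0:ℝ) < 1 - Q := by linarith
      have key : Q * ((1-Q)⁻¹) ^ (j+1) + ((1-Q)⁻¹) ^ j = ((1-Q)⁻¹) ^ (j+1) := by
        have hinv : (1-Q)⁻¹ * (1-Q) = 1 := inv_mul_cancel₀ hpos.ne'
        linear_combination (-((1-Q)⁻¹) ^ j) * hinv
      have h1 := gB_le hQ0 hQ1 n (j+1)
      have h2 := gB_le hQ0 hQ1 n j
      have hQn : Q ^ (j+1) ≤ Q := pow_le_of_le_one hQ0 hQ1.le (by omega)
      have hb1 : Q ^ (j+1) * gB Q n (j+1) ≤ Q * ((1-Q)⁻¹) ^ (j+1) := by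
        have hg := gB_nonneg hQ0 n (j+1)
        calc Q ^ (j+1) * gB Q n (j+1) ≤ Q ^ (j+1) * ((1-Q)⁻¹) ^ (j+1) :=
              mul_le_mul_of_nonneg_left h1 (by positivity)
          _ ≤ Q * ((1-Q)⁻¹) ^ (j+1) := mul_le_mul_of_nonneg_right hQn (by positivity)
      rw [gB]
      linarith

/-- The q-binomial theorem. -/
lemma qbinom (Q : ℝ) : ∀ (n : ℕ) (t : ℝ),
    ∏ k ∈ range n, (1 + t * Q ^ k) =
      ∑ j ∈ range (n+1), Q ^ (E j) * gB Q n j * t ^ j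
  | 0, t => by simp [E, gB]
  | n+1, t => by
    have peel : ∏ k ∈ range (n+1), (1 + t * Q ^ k)
        = (1 + t) * ∏ k ∈ range n, (1 + (t*Q) * Q ^ k) := by
      rw [Finset.prod_range_succ']
      simp only [pow_zero, mul_one]
      rw [mul_comm]
      congr 1
      refine Finset.prod_congr rfl fun k _ => ?_
      ring
    rw [peel, qbinom Q n (t*Q)]
    set S1 : ℝ := ∑ j ∈ range n, Q ^ (E (j+1) + (j+1)) * gB Q n (j+1) * t ^ (j+1) with hS1
    set S2 : ℝ := ∑ j ∈ range (n+1), Q ^ (E (j+1)) * gB Q n j * t ^ (j+1) with hS2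
    have hL : (1 + t) * ∑ j ∈ range (n+1), Q ^ (E j) * gB Q n j * (t*Q) ^ j
        = 1 + S1 + S2 := by
      have hS : ∑ j ∈ range (n+1), Q ^ (E j) * gB Q n j * (t*Q) ^ j
          = ∑ j ∈ range (n+1), Q ^ (E j + j) * gB Q n j * t ^ j := by
        refine Finset.sum_congr rfl fun j _ => ?_
        rw [mul_pow, pow_add]
        ring
      have hS' : ∑ j ∈ range (n+1), Q ^ (E j + j) * gB Q n j * t ^ j = 1 + S1 := by
        rw [Finset.sum_range_succ' (fun j => Q ^ (E j + j) * gB Q n j * t ^ j) n]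
        rw [hS1]
        simp only [E, gB_zero_right, pow_zero, mul_one]
        rw [add_comm]
        norm_num
      have hT : t * ∑ j ∈ range (n+1), Q ^ (E j + j) * gB Q n j * t ^ j = S2 := by
        rw [hS2, Finset.mul_sum]
        refine Finset.sum_congr rfl fun j _ => ?_
        rw [show E (j+1) = E j + j from rfl, pow_succ]
        ring
      rw [hS, add_mul, one_mul, hT, hS']
    have hR : ∑ j ∈ range (n+1+1), Q ^ (E j) * gB Q (n+1) j * t ^ j
        = 1 + S1 + S2 := by
      rw [Finset.sum_range_succ' (fun j => Q ^ (E j) * gB Q (n+1) j * t ^ j) (n+1)]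
      have h0 : Q ^ (E 0) * gB Q (n+1) 0 * t ^ 0 = 1 := by
        simp [E, gB_zero_right]
      rw [h0]
      have hsplit : ∑ j ∈ range (n+1), Q ^ (E (j+1)) * gB Q (n+1) (j+1) * t ^ (j+1)
          = (∑ j ∈ range (n+1), Q ^ (E (j+1) + (j+1)) * gB Q n (j+1) * t ^ (j+1)) + S2 := by
        rw [hS2, ← Finset.sum_add_distrib]
        refine Finset.sum_congr rfl fun j _ => ?_
        rw [show gB Q (n+1) (j+1) = Q ^ (j+1) * gB Q n (j+1) + gB Q n j from rfl, pow_add]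
        ring
      have hdrop : ∑ j ∈ range (n+1), Q ^ (E (j+1) + (j+1)) * gB Q n (j+1) * t ^ (j+1) = S1 := by
        rw [Finset.sum_range_succ, gB_eq_zero Q n (n+1) (by omega), hS1]
        ring
      rw [hsplit, hdrop]
      ring
    rw [hL, hR]

lemma estep (j : ℕ) : (j+1)*(3*(j+1)+1)/2 = j*(3*j+1)/2 + (3*j+2) := by
  have h : (j+1)*(3*(j+1)+1) = j*(3*j+1) + (3*j+2)*2 := by ring
  rw [h, Nat.add_mul_div_right _ _ (by norm_num : 0 < 2)]

lemma exp_eq : ∀ j : ℕ, 3 * E j + j + j = j*(3*j+1)/2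
  | 0 => rfl
  | j+1 => by
      rw [estep, ← exp_eq j, show E (j+1) = E j + j from rfl]
      ring

section Main

variable {q : ℝ} (hq0 : 0 ≤ q) (hq1 : q < 1)

theorem pochhammer_series_kappa_three (q : ℝ) (hq0 : 0 ≤ q) (hq1 : q < 1) :
    ∑' n : ℕ, q ^ n * ∏ k ∈ Finset.range n, (1 - q ^ (1 + 3 * k)) =
      ∑' n : ℕ, (-1 : ℝ) ^ n * q ^ (n * (3 * n + 1) / 2) /
        ∏ k ∈ Finset.range (n + 1), (1 - q ^ (1 + 3 * k)) := by
  have hq30 : (0:ℝ) ≤ q^3 := by positivity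
  have hq31 : q^3 < 1 := pow_lt_one₀ hq0 hq1 (by norm_num)
  have h1q3 : (0:ℝ) < 1 - q^3 := by linarith
  obtain ⟨c, hc⟩ : ∃ c : ℝ, c = (1 - q^3)⁻¹ := ⟨_, rfl⟩
  have hc0 : 0 < c := by rw [hc]; exact inv_pos.mpr h1q3
  obtain ⟨f, hf⟩ : ∃ f : ℕ → ℕ → ℝ,
      f = fun n j => q ^ n * ((-1:ℝ) ^ j * q ^ (3 * E j + j) * gB (q^3) n j) := ⟨_, rfl⟩
  -- positivity of denominators
  have hden : ∀ k : ℕ, 0 < 1 - q ^ (1 + 3*k) := fun k => by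
    have : q ^ (1+3*k) < 1 := pow_lt_one₀ hq0 hq1 (by omega)
    linarith
  have hprodpos : ∀ m : ℕ, 0 < ∏ k ∈ range m, (1 - q ^ (1 + 3*k)) := fun m =>
    Finset.prod_pos fun k _ => hden k
  -- summability of rows (fixed j)
  have hrow : ∀ j : ℕ, Summable (fun n => q ^ n * gB (q^3) n j) := by
    intro j
    refine Summable.of_nonneg_of_le (fun n =>
        mul_nonneg (by positivity) (gB_nonneg hq30 n j))
      (fun n => ?_) ((summable_geometric_of_lt_one hq0 hq1).mul_right (c^j))
    have : gB (q^3) n j ≤ c ^ j := by rw [hc]; exact gB_le hq30 hq31 n j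
    have hqn : (0:ℝ) ≤ q ^ n := by positivity
    exact mul_le_mul_of_nonneg_left this hqn
  -- generating function of Gaussian binomials
  have hgen : ∀ j : ℕ, ∑' n : ℕ, q ^ n * gB (q^3) n j
      = q ^ j / ∏ k ∈ range (j+1), (1 - q ^ (1 + 3*k)) := by
    intro j
    induction j with
    | zero =>
        simp only [gB_zero_right, mul_one, pow_zero]
        rw [tsum_geometric_of_lt_one hq0 hq1]
        rw [show range 1 = {0} from rfl]
        norm_num
    | succ j ih =>
        have hs := hrow (j+1)
        have key := Summable.tsum_eq_zero_add hs
        rw [show gB (q^3) 0 (j+1) = 0 from rfl] at key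
        have hterm : ∀ n : ℕ, q ^ (n+1) * gB (q^3) (n+1) (j+1)
            = (q * (q^3)^(j+1)) * (q ^ n * gB (q^3) n (j+1)) + q * (q ^ n * gB (q^3) n j) := by
          intro n
          rw [show gB (q^3) (n+1) (j+1) = (q^3) ^ (j+1) * gB (q^3) n (j+1) + gB (q^3) n j from rfl,
            pow_succ]
          ring
        rw [tsum_congr hterm, Summable.tsum_add ((hrow (j+1)).mul_left _) ((hrow j).mul_left _),
          tsum_mul_left, tsum_mul_left, ih] at key
        simp only [mul_zero, zero_add] at key
        -- key : X = q*(q^3)^(j+1) * X + q * (q^j / D j)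
        have hD : ∏ k ∈ range (j+1+1), (1 - q ^ (1 + 3*k))
            = (∏ k ∈ range (j+1), (1 - q ^ (1 + 3*k))) * (1 - q ^ (1 + 3*(j+1))) := by
          rw [Finset.prod_range_succ]
        have hqq : q * (q^3)^(j+1) = q ^ (1 + 3*(j+1)) := by
          rw [← pow_mul, pow_add, pow_one]
        have hDj := hprodpos (j+1)
        have hE := hden (j+1)
        rw [hqq] at key
        rw [hD]
        set X := ∑' n : ℕ, q ^ n * gB (q^3) n (j+1)
        have hne1 : (∏ k ∈ range (j+1), (1 - q ^ (1 + 3*k))) ≠ 0 := ne_of_gt hDj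
        have hne2 : (1 - q ^ (1 + 3*(j+1))) ≠ 0 := ne_of_gt hE
        field_simp at key ⊢
        rw [pow_succ]
        nlinarith [key]
  -- A: row sums (fixed n) give the LHS terms
  have hA : ∀ n : ℕ, ∑' j : ℕ, f n j = q ^ n * ∏ k ∈ range n, (1 - q ^ (1 + 3*k)) := by
    intro n
    have hsupp : ∀ j ∉ range (n+1), f n j = 0 := by
      intro j hj
      rw [Finset.mem_range, not_lt] at hj
      simp only [hf]
      rw [gB_eq_zero (q^3) n j (by omega)]
      ring
    rw [tsum_eq_sum hsupp]
    have hb : ∏ k ∈ range n, (1 - q ^ (1 + 3*k)) = ∏ k ∈ range n, (1 + (-q) * (q^3) ^ k) := by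
      refine Finset.prod_congr rfl fun k _ => ?_
      rw [← pow_mul, show 1 + 3*k = 3*k + 1 from by omega, pow_succ]
      ring
    rw [hb, qbinom (q^3) n (-q), Finset.mul_sum]
    refine Finset.sum_congr rfl fun j _ => ?_
    simp only [hf]
    rw [neg_pow, ← pow_mul, pow_add]
    ring
  -- B: column sums (fixed j) give the RHS terms
  have hB : ∀ j : ℕ, ∑' n : ℕ, f n j
      = (-1:ℝ) ^ j * q ^ (j * (3*j+1) / 2) / ∏ k ∈ range (j+1), (1 - q ^ (1 + 3*k)) := by
    intro j
    have : ∀ n : ℕ, f n j = ((-1:ℝ) ^ j * q ^ (3 * E j + j)) * (q ^ n * gB (q^3) n j) := by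
      intro n; simp only [hf]; ring
    rw [tsum_congr this, tsum_mul_left, hgen j, ← exp_eq j, pow_add]
    ring
  -- Fubini
  have habs : Summable (Function.uncurry f) := by
    have hv : Summable (fun j : ℕ => q ^ (3 * E j + j) * c ^ j) := by
      apply summable_of_ratio_norm_eventually_le (r := 1/2) (by norm_num)
      have htend : Tendsto (fun j : ℕ => q * (q^3) ^ j * c) atTop (nhds (q * 0 * c)) :=
        (((tendsto_pow_atTop_nhds_zero_of_lt_one hq30 hq31).const_mul q).mul_const c)
      rw [mul_zero, zero_mul] at htend
      filter_upwards [htend.eventually (gt_mem_nhds (by norm_num : (0:ℝ) < 1/2))] with j hj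
      have hval : q ^ (3 * E (j+1) + (j+1)) * c ^ (j+1)
          = (q ^ (3 * E j + j) * c ^ j) * (q * (q^3) ^ j * c) := by
        rw [show 3 * E (j+1) + (j+1) = (3 * E j + j) + (3*j+1) from by
            rw [show E (j+1) = E j + j from rfl]; ring,
          pow_add, pow_succ c, pow_succ q, pow_mul]
        ring
      have hnn : (0:ℝ) ≤ q ^ (3 * E j + j) * c ^ j := by positivity
      rw [Real.norm_eq_abs, Real.norm_eq_abs, abs_of_nonneg (by positivity),
        abs_of_nonneg hnn, hval]
      calc (q ^ (3 * E j + j) * c ^ j) * (q * (q^3) ^ j * c)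
          ≤ (q ^ (3 * E j + j) * c ^ j) * (1/2) := by
            refine mul_le_mul_of_nonneg_left hj.le hnn
        _ = 1/2 * (q ^ (3 * E j + j) * c ^ j) := by ring
    have hu : Summable (fun n : ℕ => q ^ n) := summable_geometric_of_lt_one hq0 hq1
    have hprod : Summable (fun p : ℕ × ℕ => (q ^ p.1) * (q ^ (3 * E p.2 + p.2) * c ^ p.2)) := by
      apply Summable.mul_of_nonneg hu hv
      · intro n; positivity
      · intro j; exact mul_nonneg (pow_nonneg hq0 _) (pow_nonneg hc0.le _)
    refine Summable.of_abs (Summable.of_nonneg_of_le (fun p => abs_nonneg _) (fun p => ?_) hprod)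
    obtain ⟨n, j⟩ := p
    have hg0 := gB_nonneg hq30 n j
    have hgle : gB (q^3) n j ≤ c ^ j := by rw [hc]; exact gB_le hq30 hq31 n j
    have : |Function.uncurry f (n, j)| = q ^ n * (q ^ (3 * E j + j) * gB (q^3) n j) := by
      simp only [Function.uncurry, hf]
      rw [abs_mul, abs_mul, abs_mul, abs_pow, abs_pow, abs_pow, abs_neg, abs_one, one_pow,
        abs_of_nonneg hq0, abs_of_nonneg hg0]
      ring
    rw [this]
    have : q ^ (3 * E j + j) * gB (q^3) n j ≤ q ^ (3 * E j + j) * c ^ j :=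
      mul_le_mul_of_nonneg_left hgle (by positivity)
    exact mul_le_mul_of_nonneg_left this (by positivity)
  calc ∑' n : ℕ, q ^ n * ∏ k ∈ Finset.range n, (1 - q ^ (1 + 3 * k))
      = ∑' (n : ℕ) (j : ℕ), f n j := tsum_congr fun n => (hA n).symm
    _ = ∑' (j : ℕ) (n : ℕ), f n j := (Summable.tsum_comm habs).symm
    _ = ∑' j : ℕ, (-1:ℝ) ^ j * q ^ (j * (3*j+1) / 2) / ∏ k ∈ range (j+1), (1 - q ^ (1 + 3*k)) :=
        tsum_congr hB

end Main
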